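/- If b < c, then the partial products ∏_{i=0}^{n−2} (1/ξ_{i+1}) converge to 0 as n → ∞. -/
import Mathlib


open Finset Filter Topology

noncomputable def xiSeq (b c q t₀ : ℝ) (k : ℕ) : ℝ :=
  (1 + c * (q - 1) * q ^ k * t₀) / (1 + b * (q - 1) * q ^ k * t₀)

noncomputable def aSeq (b c q t₀ κ : ℝ) (i : ℕ) : ℝ :=
  1 / (1 + b * (q - 1) * q ^ (i + 1) * t₀ /
    (1 + κ * ∏ j ∈ Finset.range (i + 1), xiSeq b c q t₀ j))

theorem inv_xi_partial_products_tendsto_zero (b c q t₀ : ℝ)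
    (hb : 0 < b) (hc : 0 < c) (hq : 1 < q) (ht : 0 < t₀) (hbc : b < c) :
    Filter.Tendsto
      (fun n : ℕ => ∏ i ∈ Finset.range (n - 1), (1 / xiSeq b c q t₀ (i + 1)))
      Filter.atTop (nhds 0) := by
  have hq0 : (0:ℝ) < q := lt_trans one_pos hq
  have hq1 : (0:ℝ) < q - 1 := by linarith
  have hA : ∀ k : ℕ, 0 < (q - 1) * q ^ k * t₀ := fun k => by positivity
  have hden : ∀ k : ℕ, 0 < 1 + b * (q - 1) * q ^ k * t₀ := fun k => by nlinarith [hA k]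
  have hnum : ∀ k : ℕ, 0 < 1 + c * (q - 1) * q ^ k * t₀ := fun k => by nlinarith [hA k]
  have hxi_pos : ∀ k : ℕ, 0 < xiSeq b c q t₀ k := fun k =>
    div_pos (hnum k) (hden k)
  have hxi1 : 1 < xiSeq b c q t₀ 1 := by
    rw [xiSeq, lt_div_iff₀ (hden 1)]
    nlinarith [hA 1]
  set r : ℝ := 1 / xiSeq b c q t₀ 1 with hr_def
  have hr0 : 0 < r := by positivity
  have hr1 : r < 1 := by
    rw [hr_def, div_lt_one (hxi_pos 1)]; exact hxi1
  have hmono : ∀ k : ℕ, 1 ≤ k → xiSeq b c q t₀ 1 ≤ xiSeq b c q t₀ k := by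
    intro k hk
    have hpow : q ^ 1 ≤ q ^ k := pow_le_pow_right₀ hq.le hk
    have hAle : (q - 1) * q ^ 1 * t₀ ≤ (q - 1) * q ^ k * t₀ := by
      have := mul_le_mul_of_nonneg_left hpow hq1.le
      nlinarith
    rw [xiSeq, xiSeq, div_le_div_iff₀ (hden 1) (hden k)]
    nlinarith [mul_nonneg (sub_nonneg.mpr hbc.le) (sub_nonneg.mpr hAle)]
  have hfac : ∀ i : ℕ, 1 / xiSeq b c q t₀ (i + 1) ≤ r := by
    intro i
    rw [hr_def]
    exact one_div_le_one_div_of_le (hxi_pos 1) (hmono (i + 1) (Nat.le_add_left 1 i))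
  have hbound : ∀ n : ℕ,
      ∏ i ∈ Finset.range (n - 1), (1 / xiSeq b c q t₀ (i + 1)) ≤ r ^ (n - 1) := by
    intro n
    calc ∏ i ∈ Finset.range (n - 1), (1 / xiSeq b c q t₀ (i + 1))
        ≤ ∏ _i ∈ Finset.range (n - 1), r := by
          exact Finset.prod_le_prod (fun i _ => (one_div_nonneg.mpr (hxi_pos _).le))
            (fun i _ => hfac i)
      _ = r ^ (n - 1) := by rw [Finset.prod_const, Finset.card_range]
  have hnonneg : ∀ n : ℕ,
      0 ≤ ∏ i ∈ Finset.range (n - 1), (1 / xiSeq b c q t₀ (i + 1)) := by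
    intro n
    exact Finset.prod_nonneg fun i _ => one_div_nonneg.mpr (hxi_pos _).le
  have hlim : Filter.Tendsto (fun n : ℕ => r ^ (n - 1)) Filter.atTop (nhds 0) :=
    (tendsto_pow_atTop_nhds_zero_of_lt_one hr0.le hr1).comp (tendsto_sub_atTop_nat 1)
  exact squeeze_zero hnonneg hbound hlim
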